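/- (Proposition 4.2, optimal spoofing signal for a QPSK Type-II symbol.) Let 0 ≤ P ≤ 4 and B ≥ 0. For all real u ≥ 0 and w ≥ 0 with u + w = B, one has (1/2 + (1/2)·erf(√u − √(P/2)))·(1/2 + (1/2)·erf(√w − √(P/2))) ≤ (1/2 + (1/2)·erf(√(B/2) − √(P/2)))². In particular, splitting the spoofing power B equally between the real and imaginary components (z_R = z_I = −√(B/2)) maximizes the spoofing success probability, so the conditional SSER equals g₂(B) = 1 − (1/2 + (1/2)·erf(√(B/2) − √(P/2)))². -/
import Mathlib

open MeasureTheory ProbabilityTheory Real Set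

noncomputable def erf (x : ℝ) : ℝ :=
  (2 / Real.sqrt Real.pi) * ∫ t in (0:ℝ)..x, Real.exp (-t^2)

lemma erf_hasDerivAt (x : ℝ) :
    HasDerivAt erf (2 / Real.sqrt Real.pi * Real.exp (-x^2)) x := by
  have hcont : Continuous fun t : ℝ => Real.exp (-t^2) := by continuity
  have h := intervalIntegral.integral_hasDerivAt_right
    (hcont.intervalIntegrable 0 x)
    (hcont.stronglyMeasurableAtFilter _ _) hcont.continuousAt
  unfold erf
  exact h.const_mul (2 / Real.sqrt Real.pi)

lemma erf_continuous : Continuous erf := by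
  have : Differentiable ℝ erf := fun x => (erf_hasDerivAt x).differentiableAt
  exact this.continuous

lemma erf_le_one {x : ℝ} (hx : 0 ≤ x) : erf x ≤ 1 := by
  have hInt : IntegrableOn (fun t : ℝ => Real.exp (-t^2)) (Ioi 0) := by
    have := (integrable_exp_neg_mul_sq (one_pos)).integrableOn (s := Ioi (0:ℝ))
    simpa using this
  have h1 : ∫ t in (0:ℝ)..x, Real.exp (-t^2) ≤ ∫ t in Ioi (0:ℝ), Real.exp (-t^2) := by
    rw [intervalIntegral.integral_of_le hx]
    apply setIntegral_mono_set hInt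
    · filter_upwards with t using (Real.exp_pos _).le
    · exact Filter.Eventually.of_forall fun t ht => ht.1
  have h2 : ∫ t in Ioi (0:ℝ), Real.exp (-t^2) = Real.sqrt Real.pi / 2 := by
    have := integral_gaussian_Ioi 1
    simpa using this
  rw [h2] at h1
  have hpi : 0 < Real.sqrt Real.pi := Real.sqrt_pos.2 Real.pi_pos
  unfold erf
  rw [div_mul_eq_mul_div, mul_comm]
  rw [div_le_one hpi]
  nlinarith
lemma neg_one_le_erf (x : ℝ) : -1 ≤ erf x := by
  rcases le_or_gt 0 x with hx | hx
  · have : 0 ≤ ∫ t in (0:ℝ)..x, Real.exp (-t^2) :=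
      intervalIntegral.integral_nonneg hx fun t _ => (Real.exp_pos _).le
    have hpi : 0 ≤ 2 / Real.sqrt Real.pi := by positivity
    unfold erf; nlinarith
  · have hodd : erf x = - erf (-x) := by
      unfold erf
      have : ∫ t in (0:ℝ)..(-x), Real.exp (-t^2) = ∫ t in (0:ℝ)..(-x), Real.exp (-(-t)^2) := by
        congr 1; ext t; ring_nf
      rw [this, intervalIntegral.integral_comp_neg (fun t => Real.exp (-t^2))]
      rw [show - -x = x by ring, show -(0:ℝ) = 0 by ring,
        intervalIntegral.integral_symm]
      ring
    rw [hodd]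
    have := erf_le_one (x := -x) (by linarith)
    linarith

lemma F_hasDerivAt {c x : ℝ} (hx : 0 < x) :
    HasDerivAt (fun y => 1/2 + 1/2 * erf (Real.sqrt y - c))
      (Real.exp (-(Real.sqrt x - c)^2) / (Real.sqrt Real.pi * (2 * Real.sqrt x))) x := by
  have h1 : HasDerivAt (fun y : ℝ => Real.sqrt y - c) (1 / (2 * Real.sqrt x)) x :=
    (Real.hasDerivAt_sqrt hx.ne').sub_const c
  have h2 := (erf_hasDerivAt (Real.sqrt x - c)).comp x h1
  have h3 : HasDerivAt (fun y => 1/2 + 1/2 * erf (Real.sqrt y - c))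
      ((1/2 : ℝ) * (2 / Real.sqrt Real.pi * Real.exp (-(Real.sqrt x - c)^2) *
        (1 / (2 * Real.sqrt x)))) x := by
    simpa [Function.comp] using (h2.const_mul (1/2 : ℝ)).const_add (1/2 : ℝ)
  convert h3 using 1
  have hs : Real.sqrt x ≠ 0 := (Real.sqrt_pos.2 hx).ne'
  have hpi : Real.sqrt Real.pi ≠ 0 := (Real.sqrt_pos.2 Real.pi_pos).ne'
  field_simp

lemma D_antitone {c : ℝ} (hc : c ≤ Real.sqrt 2) :
    AntitoneOn (fun x => Real.exp (-(Real.sqrt x - c)^2) /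
      (Real.sqrt Real.pi * (2 * Real.sqrt x))) (Ioi 0) := by
  intro x hx y hy hxy
  simp only
  set s := Real.sqrt x with hsdef
  set t := Real.sqrt y with htdef
  have hs : 0 < s := Real.sqrt_pos.2 hx
  have ht : 0 < t := Real.sqrt_pos.2 hy
  have hst : s ≤ t := Real.sqrt_le_sqrt hxy
  have hlog : (s - c)^2 - (t - c)^2 ≤ Real.log t - Real.log s := by
    have hint : Real.log t - Real.log s = ∫ r in s..t, r⁻¹ := by
      rw [integral_inv_of_pos hs ht, Real.log_div ht.ne' hs.ne']
    have hcont2 : Continuous fun r : ℝ => 2 * Real.sqrt 2 - 2 * r := by continuity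
    have hint2 : ∫ r in s..t, (2 * Real.sqrt 2 - 2 * r)
        = 2 * Real.sqrt 2 * (t - s) - (t^2 - s^2) := by
      rw [intervalIntegral.integral_sub intervalIntegrable_const
        ((by continuity : Continuous fun r : ℝ => (2:ℝ) * r).intervalIntegrable s t),
        intervalIntegral.integral_const, intervalIntegral.integral_const_mul, integral_id]
      simp [smul_eq_mul]; ring
    have hmono : ∫ r in s..t, (2 * Real.sqrt 2 - 2 * r) ≤ ∫ r in s..t, r⁻¹ := by
      apply intervalIntegral.integral_mono_on hst (hcont2.intervalIntegrable s t)
      · apply ContinuousOn.intervalIntegrable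
        apply ContinuousOn.inv₀ continuousOn_id
        intro r hr
        rw [uIcc_of_le hst] at hr
        exact (lt_of_lt_of_le hs hr.1).ne'
      · intro r hr
        have hr0 : 0 < r := lt_of_lt_of_le hs hr.1
        have h2 : Real.sqrt 2 ^ 2 = 2 := Real.sq_sqrt (by norm_num)
        have key2 : 0 ≤ 2 * r^2 - 2 * Real.sqrt 2 * r + 1 := by
          calc (0:ℝ) ≤ (Real.sqrt 2 * r - 1)^2 := sq_nonneg _
            _ = Real.sqrt 2 ^ 2 * r^2 - 2 * Real.sqrt 2 * r + 1 := by ring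
            _ = 2 * r^2 - 2 * Real.sqrt 2 * r + 1 := by rw [h2]
        have h1 : (2 * Real.sqrt 2 - 2 * r) * r ≤ 1 := by nlinarith [key2]
        rw [← one_div, le_div_iff₀ hr0]
        exact h1
    have h2c : 2 * c * (t - s) ≤ 2 * Real.sqrt 2 * (t - s) := by
      nlinarith [mul_nonneg (sub_nonneg.2 hst) (sub_nonneg.2 hc)]
    rw [hint]
    nlinarith [hmono, hint2]
  have key : Real.exp (-(t - c)^2) * s ≤ Real.exp (-(s - c)^2) * t := by
    have h := Real.exp_le_exp.2 (show -(t-c)^2 + Real.log s ≤ -(s-c)^2 + Real.log t by linarith)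
    rwa [Real.exp_add, Real.exp_add, Real.exp_log hs, Real.exp_log ht] at h
  have hpi : 0 < Real.sqrt Real.pi := Real.sqrt_pos.2 Real.pi_pos
  rw [div_le_div_iff₀ (by positivity) (by positivity)]
  nlinarith [mul_le_mul_of_nonneg_left key (by positivity : (0:ℝ) ≤ 2 * Real.sqrt Real.pi)]

lemma F_concave {c : ℝ} (hc : c ≤ Real.sqrt 2) :
    ConcaveOn ℝ (Ici 0) (fun x => 1/2 + 1/2 * erf (Real.sqrt x - c)) := by
  apply AntitoneOn.concaveOn_of_deriv (convex_Ici 0)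
  · exact (continuous_const.add (continuous_const.mul
      (erf_continuous.comp (Real.continuous_sqrt.sub continuous_const)))).continuousOn
  · rw [interior_Ici]
    exact fun x hx => ((F_hasDerivAt hx).differentiableAt).differentiableWithinAt
  · rw [interior_Ici]
    have hderiv : ∀ x ∈ Ioi (0:ℝ), deriv (fun x => 1/2 + 1/2 * erf (Real.sqrt x - c)) x
        = Real.exp (-(Real.sqrt x - c)^2) / (Real.sqrt Real.pi * (2 * Real.sqrt x)) :=
      fun x hx => (F_hasDerivAt hx).deriv
    intro a ha b hb hab
    rw [hderiv a ha, hderiv b hb]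
    exact D_antitone hc ha hb hab

lemma F_nonneg (c x : ℝ) : 0 ≤ 1/2 + 1/2 * erf (Real.sqrt x - c) := by
  have := neg_one_le_erf (Real.sqrt x - c)
  linarith

theorem stmt_13 (P B : ℝ) (hP0 : 0 ≤ P) (hP4 : P ≤ 4) (hB : 0 ≤ B) :
    ∀ u w : ℝ, 0 ≤ u → 0 ≤ w → u + w = B →
      (1/2 + (1/2) * erf (Real.sqrt u - Real.sqrt (P/2))) *
        (1/2 + (1/2) * erf (Real.sqrt w - Real.sqrt (P/2))) ≤
      (1/2 + (1/2) * erf (Real.sqrt (B/2) - Real.sqrt (P/2)))^2 := by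
  intro u w hu hw huw
  set c := Real.sqrt (P/2) with hc
  have hc2 : c ≤ Real.sqrt 2 := Real.sqrt_le_sqrt (by linarith)
  have hconc := F_concave hc2
  have hmid := hconc.2 (mem_Ici.2 hu) (mem_Ici.2 hw)
    (by norm_num : (0:ℝ) ≤ 1/2) (by norm_num : (0:ℝ) ≤ 1/2) (by norm_num)
  simp only [smul_eq_mul] at hmid
  have hBhalf : (1/2 : ℝ) * u + (1/2) * w = B/2 := by linarith
  rw [hBhalf] at hmid
  set a := 1/2 + (1/2 : ℝ) * erf (Real.sqrt u - c) with hadef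
  set b := 1/2 + (1/2 : ℝ) * erf (Real.sqrt w - c) with hbdef
  set m := 1/2 + (1/2 : ℝ) * erf (Real.sqrt (B/2) - c) with hmdef
  have ha : 0 ≤ a := F_nonneg c u
  have hb2 : 0 ≤ b := F_nonneg c w
  clear_value a b m
  have hm : (a + b) / 2 ≤ m := by linarith
  have h1 : ((a + b)/2) * ((a + b)/2) ≤ m * m :=
    mul_self_le_mul_self (by linarith) hm
  nlinarith [sq_nonneg (a - b)]
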